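/- arXiv:1207.2271 — 3 statements merged into one kernel-verified Lean document; each statement's English description precedes it below -/
import Mathlib

section
/- There exists $\alpha\in(0,a_0)$ such that for all $(s,t)\in(-\alpha,0)\times(-\alpha,\alpha)$ one has $d(\Phi(s,t),\gamma)=|\Phi(s,t)-\Gamma(0)|$, and for all $(s,t)\in(L,L+\alpha)\times(-\alpha,\alpha)$ one has $d(\Phi(s,t),\gamma)=|\Phi(s,t)-\Gamma(L)|$; i.e., beyond the endpoints the nearest point of the arc is the respective endpoint. -/
open scoped RealInnerProductSpace


private lemma sq_le_sq_imp (a b : ℝ) (ha : 0 ≤ a) (hb : 0 ≤ b) (h : a^2 ≤ b^2) : a ≤ b := by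
  nlinarith

private lemma sq_lb_helper (σ x : ℝ) (hσ : 0 < σ) (h : (7/8) * σ ≤ x) :
    (49/64) * σ^2 ≤ x^2 := by nlinarith

private lemma ip_total (M α δ s σ t A B C D E : ℝ)
    (hM1 : 1 ≤ M) (hαpos : 0 < α) (hαδ : α ≤ δ) (hαM : M * α ≤ 1/8) (hδM : M * δ ≤ 1/8)
    (hs1 : -α < s) (hs2 : s < 0) (ht : |t| ≤ α) (hσ1 : 0 < σ) (hσ2 : σ ≤ δ)
    (hA : |A| ≤ M * σ^2) (hB : |B| ≤ M * s^2) (hC : |C| ≤ (M * s^2) * (M * σ^2))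
    (hD : |D| ≤ M * (-s)) (hE : |E| ≤ M * σ^2) :
    2 * (s * σ + s * A + σ * B + C + t * σ * D + t * E) ≤ (49/64) * σ^2 := by
  obtain ⟨hA1, hA2⟩ := abs_le.mp hA
  obtain ⟨hB1, hB2⟩ := abs_le.mp hB
  obtain ⟨hC1, hC2⟩ := abs_le.mp hC
  obtain ⟨hD1, hD2⟩ := abs_le.mp hD
  obtain ⟨hE1, hE2⟩ := abs_le.mp hE
  obtain ⟨ht1, ht2⟩ := abs_le.mp ht
  have hMpos : 0 < M := lt_of_lt_of_le one_pos hM1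
  have hsα : -s ≤ α := by linarith
  have hsnn : (0:ℝ) ≤ -s := by linarith
  have hσ2' : 0 ≤ σ^2 := sq_nonneg σ
  have hsσ : 0 ≤ (-s) * σ := mul_nonneg hsnn hσ1.le
  have hMs : M * (-s) ≤ 1/8 :=
    le_trans (mul_le_mul_of_nonneg_left hsα hMpos.le) hαM
  have hMσ : M * σ ≤ 1/8 :=
    le_trans (mul_le_mul_of_nonneg_left hσ2 hMpos.le) hδM
  have hMσ2 : 0 ≤ M * σ^2 := by positivity
  have t1 : s * A ≤ (1/8) * σ^2 := by
    have h1 : s * A ≤ s * (-(M * σ^2)) := mul_le_mul_of_nonpos_left hA1 hs2.le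
    have h2 : (-s) * (M * σ^2) ≤ α * (M * σ^2) := mul_le_mul_of_nonneg_right hsα hMσ2
    have h3 : (M * α) * σ^2 ≤ (1/8) * σ^2 := mul_le_mul_of_nonneg_right hαM hσ2'
    linarith
  have hB3 : B ≤ (1/8) * (-s) := by
    have h1 := mul_le_mul_of_nonneg_right hMs hsnn
    linarith
  have t2 : σ * B ≤ (1/8) * ((-s) * σ) := by
    have h1 := mul_le_mul_of_nonneg_left hB3 hσ1.le
    linarith
  have t3 : C ≤ (1/64) * ((-s) * σ) := by
    have h64 : (M * (-s)) * (M * σ) ≤ (1/8) * (1/8) :=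
      mul_le_mul hMs hMσ (by positivity) (by norm_num)
    have h1 := mul_le_mul_of_nonneg_right h64 hsσ
    linarith
  have t4 : t * σ * D ≤ (1/8) * ((-s) * σ) := by
    have h1 : |t * σ * D| ≤ α * σ * (M * (-s)) := by
      rw [abs_mul, abs_mul, abs_of_pos hσ1]
      apply mul_le_mul (mul_le_mul ht le_rfl hσ1.le hαpos.le) hD (abs_nonneg _) (by positivity)
    have h2 := (abs_le.mp h1).2
    have h3 := mul_le_mul_of_nonneg_right hαM hsσ
    linarith
  have t5 : t * E ≤ (1/8) * σ^2 := by
    have h1 : |t * E| ≤ α * (M * σ^2) := by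
      rw [abs_mul]
      exact mul_le_mul ht hE (abs_nonneg _) hαpos.le
    have h2 := (abs_le.mp h1).2
    have h3 := mul_le_mul_of_nonneg_right hαM hσ2'
    linarith
  have t0 : s * σ ≤ -((-s) * σ) := by linarith [hσ1.le]
  linarith

set_option maxHeartbeats 1600000 in
lemma aux_endpoint {E : Type*} [NormedAddCommGroup E] [InnerProductSpace ℝ E]
    (L : ℝ) (hL : 0 < L) (g : ℝ → E) (hg : ContDiff ℝ 2 g)
    (hunit : ∀ s, ‖deriv g s‖ = 1) (hinj : Set.InjOn g (Set.Icc 0 L)) :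
    ∃ α > 0, ∀ (s t : ℝ) (v : E), s ∈ Set.Ioo (-α) 0 → |t| < α → ‖v‖ = 1 →
      ⟪v, deriv g s⟫ = 0 →
      Metric.infDist (g s + t • v) (g '' Set.Ioo 0 L) = dist (g s + t • v) (g 0) := by
  have hgd : Differentiable ℝ g := hg.differentiable (by norm_num)
  have hg1 : ContDiff ℝ 1 (deriv g) := by
    have := (contDiff_succ_iff_deriv (n := 1)).mp (by exact_mod_cast hg)
    exact this.2.2
  have hgd1 : Differentiable ℝ (deriv g) := hg1.differentiable (by norm_num)
  have hc2 : Continuous (deriv (deriv g)) := by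
    have := (contDiff_succ_iff_deriv (n := 0)).mp (by exact_mod_cast hg1)
    exact this.2.2.continuous
  -- bound on second derivative
  obtain ⟨M0, hM0⟩ := (isCompact_Icc (a := (-1:ℝ)) (b := L+1)).exists_bound_of_continuousOn
    hc2.continuousOn
  set M := max M0 1 with hMdef
  have hM1 : (1:ℝ) ≤ M := le_max_right _ _
  have hMpos : (0:ℝ) < M := lt_of_lt_of_le one_pos hM1
  have hM : ∀ x ∈ Set.Icc (-1:ℝ) (L+1), ‖deriv (deriv g) x‖ ≤ M :=
    fun x hx => (hM0 x hx).trans (le_max_left _ _)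
  have hIcc : Convex ℝ (Set.Icc (-1:ℝ) (L+1)) := convex_Icc _ _
  -- (i) Lipschitz bound for g
  have key1 : ∀ a ∈ Set.Icc (-1:ℝ) (L+1), ∀ b ∈ Set.Icc (-1:ℝ) (L+1),
      ‖g b - g a‖ ≤ |b - a| := by
    intro a ha b hb
    have := hIcc.norm_image_sub_le_of_norm_hasDerivWithin_le
      (f := g) (f' := deriv g)
      (fun x _ => (hgd x).hasDerivAt.hasDerivWithinAt)
      (fun x _ => le_of_eq (hunit x)) ha hb
    simpa [Real.norm_eq_abs] using this
  -- (ii) Lipschitz bound for deriv g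
  have key2 : ∀ a ∈ Set.Icc (-1:ℝ) (L+1), ∀ b ∈ Set.Icc (-1:ℝ) (L+1),
      ‖deriv g b - deriv g a‖ ≤ M * |b - a| := by
    intro a ha b hb
    have := hIcc.norm_image_sub_le_of_norm_hasDerivWithin_le
      (f := deriv g) (f' := deriv (deriv g))
      (fun x _ => (hgd1 x).hasDerivAt.hasDerivWithinAt)
      (fun x hx => hM x hx) ha hb
    simpa [Real.norm_eq_abs] using this
  -- (iii) quadratic Taylor-type bound
  have key3 : ∀ a ∈ Set.Icc (-1:ℝ) (L+1), ∀ b ∈ Set.Icc (-1:ℝ) (L+1),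
      ‖g b - g a - (b - a) • deriv g a‖ ≤ M * |b - a| * |b - a| := by
    intro a ha b hb
    have hsub : Set.uIcc a b ⊆ Set.Icc (-1:ℝ) (L+1) := Set.uIcc_subset_Icc ha hb
    have hconv : Convex ℝ (Set.uIcc a b) := convex_uIcc a b
    have hd : ∀ x ∈ Set.uIcc a b,
        HasDerivWithinAt (fun τ => g τ - τ • deriv g a) (deriv g x - deriv g a)
          (Set.uIcc a b) x := by
      intro x _
      have h1 : HasDerivAt (fun τ : ℝ => τ • deriv g a) (deriv g a) x := by
        simpa using (hasDerivAt_id x).smul_const (deriv g a)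
      exact ((hgd x).hasDerivAt.sub h1).hasDerivWithinAt
    have hb' : ∀ x ∈ Set.uIcc a b, ‖deriv g x - deriv g a‖ ≤ M * |b - a| := by
      intro x hx
      have := key2 a ha x (hsub hx)
      have hxa : |x - a| ≤ |b - a| := Set.abs_sub_left_of_mem_uIcc hx
      exact this.trans (mul_le_mul_of_nonneg_left hxa hMpos.le)
    have := hconv.norm_image_sub_le_of_norm_hasDerivWithin_le hd hb'
      Set.left_mem_uIcc Set.right_mem_uIcc
    have heq : (g b - b • deriv g a) - (g a - a • deriv g a)
        = g b - g a - (b - a) • deriv g a := by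
      rw [sub_smul]; abel
    rw [heq] at this
    simpa [Real.norm_eq_abs] using this
  -- choice of δ
  set δ : ℝ := min (min 1 L) (1/(8*M)) with hδdef
  have hδpos : 0 < δ := by
    apply lt_min (lt_min one_pos hL)
    positivity
  have hδL : δ ≤ L := le_trans (min_le_left _ _) (min_le_right _ _)
  have hδ1 : δ ≤ 1 := le_trans (min_le_left _ _) (min_le_left _ _)
  have hδM : M * δ ≤ 1/8 := by
    have h := min_le_right (min 1 L) (1/(8*M))
    calc M * δ ≤ M * (1/(8*M)) := mul_le_mul_of_nonneg_left h hMpos.le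
      _ = 1/8 := by field_simp
  -- the gap constant c
  have hne : (Set.Icc δ L).Nonempty := ⟨δ, le_rfl, hδL⟩
  obtain ⟨σ₀, hσ₀, hmin⟩ := isCompact_Icc.exists_isMinOn hne
    ((hgd.continuous.sub continuous_const).norm.continuousOn (s := Set.Icc δ L))
  set c : ℝ := ‖g σ₀ - g 0‖ with hcdef
  have hcpos : 0 < c := by
    rw [hcdef, norm_pos_iff, sub_ne_zero]
    intro h
    have h0 : σ₀ = 0 := hinj ⟨le_trans hδpos.le hσ₀.1, hσ₀.2⟩ ⟨le_rfl, hL.le⟩ h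
    linarith [hσ₀.1]
  -- choice of α
  refine ⟨min (min δ (c/4)) (1/(8*M)), ?_, ?_⟩
  · apply lt_min (lt_min hδpos (by positivity)); positivity
  set α : ℝ := min (min δ (c/4)) (1/(8*M)) with hαdef
  have hαδ : α ≤ δ := le_trans (min_le_left _ _) (min_le_left _ _)
  have hαc : α ≤ c/4 := le_trans (min_le_left _ _) (min_le_right _ _)
  have hαM : M * α ≤ 1/8 := by
    have h := min_le_right (min δ (c/4)) (1/(8*M))
    calc M * α ≤ M * (1/(8*M)) := mul_le_mul_of_nonneg_left h hMpos.le
      _ = 1/8 := by field_simp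
  have hα1 : α ≤ 1 := le_trans hαδ hδ1
  have hαpos : 0 < α := lt_min (lt_min hδpos (by positivity)) (by positivity)
  intro s t v hs ht hv hperp
  set x : E := g s + t • v with hxdef
  have hsmem : s ∈ Set.Icc (-1:ℝ) (L+1) := ⟨by linarith [hs.1], by linarith [hs.2]⟩
  have h0mem : (0:ℝ) ∈ Set.Icc (-1:ℝ) (L+1) := ⟨by linarith, by linarith⟩
  have hsabs : |s| < α := by rw [abs_lt]; exact ⟨hs.1, lt_trans hs.2 hαpos⟩
  -- distance from x to g 0
  have hx0 : ‖x - g 0‖ < 2 * α := by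
    have h1 : x - g 0 = (g s - g 0) + t • v := by rw [hxdef]; abel
    have h2 : ‖g s - g 0‖ ≤ |s| := by simpa using key1 0 h0mem s hsmem
    have h3 : ‖t • v‖ = |t| := by rw [norm_smul, hv, Real.norm_eq_abs, mul_one]
    calc ‖x - g 0‖ ≤ ‖g s - g 0‖ + ‖t • v‖ := by rw [h1]; exact norm_add_le _ _
      _ = ‖g s - g 0‖ + |t| := by rw [h3]
      _ < 2 * α := by linarith
  -- key pointwise comparison
  have key_ge : ∀ σ ∈ Set.Ioo (0:ℝ) L, ‖x - g 0‖ ≤ ‖x - g σ‖ := by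
    intro σ hσ
    have hσmem : σ ∈ Set.Icc (-1:ℝ) (L+1) := ⟨by linarith [hσ.1], by linarith [hσ.2]⟩
    by_cases hcase : δ ≤ σ
    · -- far case
      have hgap : c ≤ ‖g σ - g 0‖ := hmin ⟨hcase, hσ.2.le⟩
      have htri : ‖g σ - g 0‖ ≤ ‖g σ - x‖ + ‖x - g 0‖ := by
        have := norm_sub_le_norm_sub_add_norm_sub (g σ) x (g 0)
        linarith
      have hrev : ‖g σ - x‖ = ‖x - g σ‖ := norm_sub_rev _ _
      linarith
    · -- near case
      push_neg at hcase
      have hσδ' : σ ≤ δ := hcase.le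
      set u : E := deriv g 0 with hudef
      have hu1 : ‖u‖ = 1 := hunit 0
      set e : E := g σ - g 0 - σ • u with hedef
      set e' : E := g s - g 0 - s • u with he'def
      have he : ‖e‖ ≤ M * σ^2 := by
        have h0 := key3 0 h0mem σ hσmem
        have habs : |σ - 0| = σ := by rw [sub_zero, abs_of_pos hσ.1]
        rw [habs] at h0
        have h2 : M * σ * σ = M * σ^2 := by ring
        rw [h2] at h0
        simpa [hedef, hudef] using h0
      have he' : ‖e'‖ ≤ M * s^2 := by
        have h0 := key3 0 h0mem s hsmem
        have habs : |s - 0| = -s := by rw [sub_zero, abs_of_neg hs.2]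
        rw [habs] at h0
        have h2 : M * -s * -s = M * s^2 := by ring
        rw [h2] at h0
        simpa [he'def, hudef] using h0
      have hvu : |⟪v, u⟫| ≤ M * (-s) := by
        have h1 : ⟪v, u⟫ = ⟪v, u - deriv g s⟫ := by
          rw [inner_sub_right, hperp, sub_zero]
        have h2 : ‖deriv g 0 - deriv g s‖ ≤ M * |0 - s| := key2 s hsmem 0 h0mem
        have habs : |(0:ℝ) - s| = -s := by rw [zero_sub, abs_of_pos (by linarith [hs.2] : 0 < -s)]
        rw [habs] at h2
        calc |⟪v, u⟫| = |⟪v, u - deriv g s⟫| := by rw [h1]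
          _ ≤ ‖v‖ * ‖u - deriv g s‖ := abs_real_inner_le_norm _ _
          _ = ‖deriv g 0 - deriv g s‖ := by rw [hv, one_mul, hudef]
          _ ≤ M * (-s) := h2
      -- decompositions
      have hdecx : x - g 0 = s • u + e' + t • v := by rw [hxdef, he'def]; abel
      have hdecσ : g σ - g 0 = σ • u + e := by rw [hedef]; abel
      -- expand the inner product
      have hexp : ⟪x - g 0, g σ - g 0⟫ =
          s * σ + s * ⟪u, e⟫ + σ * ⟪e', u⟫ + ⟪e', e⟫
            + t * σ * ⟪v, u⟫ + t * ⟪v, e⟫ := by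
        rw [hdecx, hdecσ]
        simp only [inner_add_left, inner_add_right, real_inner_smul_left, real_inner_smul_right]
        have huu : ⟪u, u⟫ = 1 := by rw [real_inner_self_eq_norm_sq, hu1]; norm_num
        rw [huu]; ring
      -- bounds on the inner product terms
      have hue : |⟪u, e⟫| ≤ M * σ^2 := by
        calc |⟪u, e⟫| ≤ ‖u‖ * ‖e‖ := abs_real_inner_le_norm _ _
          _ = ‖e‖ := by rw [hu1, one_mul]
          _ ≤ M * σ^2 := he
      have he'u : |⟪e', u⟫| ≤ M * s^2 := by
        calc |⟪e', u⟫| ≤ ‖e'‖ * ‖u‖ := abs_real_inner_le_norm _ _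
          _ = ‖e'‖ := by rw [hu1, mul_one]
          _ ≤ M * s^2 := he'
      have he'e : |⟪e', e⟫| ≤ (M * s^2) * (M * σ^2) := by
        calc |⟪e', e⟫| ≤ ‖e'‖ * ‖e‖ := abs_real_inner_le_norm _ _
          _ ≤ (M * s^2) * (M * σ^2) := by
              apply mul_le_mul he' he (norm_nonneg _) (by positivity)
      have hve : |⟪v, e⟫| ≤ M * σ^2 := by
        calc |⟪v, e⟫| ≤ ‖v‖ * ‖e‖ := abs_real_inner_le_norm _ _
          _ = ‖e‖ := by rw [hv, one_mul]
          _ ≤ M * σ^2 := he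
      -- lower bound on ‖g σ - g 0‖
      have hlb : (7/8) * σ ≤ ‖g σ - g 0‖ := by
        have h1 : ‖σ • u‖ ≤ ‖g σ - g 0‖ + ‖e‖ := by
          have : (σ • u : E) = (g σ - g 0) + (-e) := by rw [hdecσ]; abel
          calc ‖σ • u‖ = ‖(g σ - g 0) + (-e)‖ := by rw [this]
            _ ≤ ‖g σ - g 0‖ + ‖-e‖ := norm_add_le _ _
            _ = ‖g σ - g 0‖ + ‖e‖ := by rw [norm_neg]
        have h2 : ‖σ • u‖ = σ := by
          rw [norm_smul, hu1, Real.norm_eq_abs, mul_one, abs_of_pos hσ.1]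
        have h3 : M * σ^2 ≤ (1/8) * σ := by
          have : M * σ ≤ 1/8 := le_trans (by nlinarith [hσ.1, hσδ'] : M * σ ≤ M * δ) hδM
          nlinarith [hσ.1]
        linarith
      -- the square comparison
      have hsq : ‖x - g σ‖^2 = ‖x - g 0‖^2 - 2 * ⟪x - g 0, g σ - g 0⟫ + ‖g σ - g 0‖^2 := by
        have h1 : x - g σ = (x - g 0) - (g σ - g 0) := by abel
        rw [h1, norm_sub_sq_real]
      have habs : |t| ≤ α := ht.le
      have hsneg : s < 0 := hs.2
      have hsα : -s ≤ α := by linarith [abs_lt.mp hsabs]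
      have hσδ : σ ≤ δ := hcase.le
      have hσpos : 0 < σ := hσ.1
      -- bound 2⟪x-g0, gσ-g0⟫ ≤ (49/64) σ²
      have hIP : 2 * ⟪x - g 0, g σ - g 0⟫ ≤ (49/64) * σ^2 := by
        rw [hexp]
        exact ip_total M α δ s σ t _ _ _ _ _ hM1 hαpos hαδ hαM hδM hs.1 hs.2 habs
          hσpos hσδ hue he'u he'e hvu hve
      have hfinal : ‖x - g 0‖^2 ≤ ‖x - g σ‖^2 := by
        have hlb2 : (49/64) * σ^2 ≤ ‖g σ - g 0‖^2 := sq_lb_helper σ _ hσpos hlb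
        rw [hsq]; linarith
      exact sq_le_sq_imp _ _ (norm_nonneg _) (norm_nonneg _) hfinal
  -- conclude
  have hSne : (g '' Set.Ioo 0 L).Nonempty := ⟨g (L/2), ⟨L/2, ⟨by linarith, by linarith⟩, rfl⟩⟩
  apply le_antisymm
  · -- infDist ≤ dist x (g 0)
    have hcl : g 0 ∈ closure (g '' Set.Ioo 0 L) := by
      apply map_mem_closure hgd.continuous _ (Set.mapsTo_image _ _)
      rw [closure_Ioo hL.ne]
      exact ⟨le_rfl, hL.le⟩
    rw [← Metric.infDist_closure]
    exact Metric.infDist_le_dist_of_mem hcl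
  · -- dist x (g 0) ≤ infDist
    by_contra hcon
    push_neg at hcon
    obtain ⟨y, ⟨σ, hσ, rfl⟩, hy⟩ := (Metric.infDist_lt_iff hSne).mp hcon
    have := key_ge σ hσ
    rw [dist_eq_norm, dist_eq_norm] at hy
    linarith

theorem dist_to_arc_beyond_endpoints
    (L l₀ a₀ K : ℝ) (hL : 0 < L) (hl₀ : 0 < l₀)
    (Γ : ℝ → EuclideanSpace ℝ (Fin 2))
    (hΓ : ContDiff ℝ 4 Γ)
    (hunit : ∀ s, ‖deriv Γ s‖ = 1)
    (hinj : Set.InjOn Γ (Set.Icc (-l₀) (L + l₀)))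
    (n : ℝ → EuclideanSpace ℝ (Fin 2))
    (hn : ∀ s, n s 0 = -(deriv Γ s 1) ∧ n s 1 = deriv Γ s 0)
    (κ : ℝ → ℝ)
    (hκ : ∀ s, κ s = deriv Γ s 0 * deriv (deriv Γ) s 1 - deriv (deriv Γ) s 0 * deriv Γ s 1)
    (hK : ∀ s ∈ Set.Icc (-l₀) (L + l₀), |κ s| ≤ K)
    (Φ : ℝ × ℝ → EuclideanSpace ℝ (Fin 2))
    (hΦ : ∀ p : ℝ × ℝ, Φ p = Γ p.1 + p.2 • n p.1)
    (ha₀ : 0 < a₀) (ha₀K : 2 * K * a₀ < 1) (ha₀l : a₀ < l₀)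
    (hdiff : Set.InjOn Φ (Set.Ioo (-a₀) (L + a₀) ×ˢ Set.Ioo (-a₀) a₀)) :
    ∃ α, 0 < α ∧ α < a₀ ∧
      (∀ s t : ℝ, s ∈ Set.Ioo (-α) 0 → t ∈ Set.Ioo (-α) α →
        Metric.infDist (Φ (s, t)) (Γ '' Set.Ioo 0 L) = dist (Φ (s, t)) (Γ 0)) ∧
      (∀ s t : ℝ, s ∈ Set.Ioo L (L + α) → t ∈ Set.Ioo (-α) α →
        Metric.infDist (Φ (s, t)) (Γ '' Set.Ioo 0 L) = dist (Φ (s, t)) (Γ L)) := by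
  -- basic facts about n
  have hn_norm : ∀ s, ‖n s‖ = 1 := by
    intro s
    have h1 : ⟪n s, n s⟫ = ⟪deriv Γ s, deriv Γ s⟫ := by
      simp only [PiLp.inner_apply, RCLike.inner_apply, starRingEnd_apply, star_trivial,
        Fin.sum_univ_two]
      rw [(hn s).1, (hn s).2]; ring
    have h2 : ‖n s‖^2 = ‖deriv Γ s‖^2 := by
      rw [← real_inner_self_eq_norm_sq, ← real_inner_self_eq_norm_sq, h1]
    rw [hunit s] at h2
    have h3 : ‖n s‖ = Real.sqrt (‖n s‖^2) := (Real.sqrt_sq (norm_nonneg _)).symm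
    rw [h3, h2]; norm_num
  have hn_perp : ∀ s, ⟪n s, deriv Γ s⟫ = 0 := by
    intro s
    simp only [PiLp.inner_apply, RCLike.inner_apply, starRingEnd_apply, star_trivial,
      Fin.sum_univ_two]
    rw [(hn s).1, (hn s).2]; ring
  have hΓ2 : ContDiff ℝ 2 Γ := hΓ.of_le (by norm_num)
  -- apply the aux lemma to Γ itself
  have hinj1 : Set.InjOn Γ (Set.Icc 0 L) := by
    apply hinj.mono
    intro x hx
    exact ⟨by linarith [hx.1], by linarith [hx.2]⟩
  obtain ⟨α₁, hα₁pos, hmain1⟩ := aux_endpoint L hL Γ hΓ2 hunit hinj1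
  -- the reversed curve
  set g : ℝ → EuclideanSpace ℝ (Fin 2) := fun σ => Γ (L - σ) with hgdef
  have hg2 : ContDiff ℝ 2 g := hΓ2.comp (contDiff_const.sub contDiff_id)
  have hgderiv : ∀ σ, deriv g σ = -deriv Γ (L - σ) := by
    intro σ
    have h1 : HasDerivAt (fun τ : ℝ => L - τ) (-1) σ := by
      exact (hasDerivAt_id σ).const_sub L
    have h2 : HasDerivAt Γ (deriv Γ (L - σ)) (L - σ) :=
      ((hΓ2.differentiable (by norm_num)) (L - σ)).hasDerivAt
    have h3 : HasDerivAt g ((-1 : ℝ) • deriv Γ (L - σ)) σ := h2.scomp σ h1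
    rw [h3.deriv]; simp
  have hgunit : ∀ σ, ‖deriv g σ‖ = 1 := by
    intro σ; rw [hgderiv, norm_neg]; exact hunit _
  have hginj : Set.InjOn g (Set.Icc 0 L) := by
    intro a ha b hb hab
    have h1 : L - a ∈ Set.Icc (-l₀) (L + l₀) := ⟨by linarith [ha.2], by linarith [ha.1]⟩
    have h2 : L - b ∈ Set.Icc (-l₀) (L + l₀) := ⟨by linarith [hb.2], by linarith [hb.1]⟩
    have := hinj h1 h2 hab
    linarith
  obtain ⟨α₂, hα₂pos, hmain2⟩ := aux_endpoint L hL g hg2 hgunit hginj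
  have himg : g '' Set.Ioo 0 L = Γ '' Set.Ioo 0 L := by
    ext y
    constructor
    · rintro ⟨σ, hσ, rfl⟩
      exact ⟨L - σ, ⟨by linarith [hσ.2], by linarith [hσ.1]⟩, rfl⟩
    · rintro ⟨σ, hσ, rfl⟩
      exact ⟨L - σ, ⟨by linarith [hσ.2], by linarith [hσ.1]⟩, by simp [hgdef]⟩
  -- choose α
  refine ⟨min (min α₁ α₂) (a₀/2), ?_, ?_, ?_, ?_⟩
  · exact lt_min (lt_min hα₁pos hα₂pos) (by linarith)
  · calc min (min α₁ α₂) (a₀/2) ≤ a₀/2 := min_le_right _ _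
      _ < a₀ := by linarith
  · -- near s = 0
    intro s t hs ht
    set α := min (min α₁ α₂) (a₀/2) with hαdef
    have hαα₁ : α ≤ α₁ := le_trans (min_le_left _ _) (min_le_left _ _)
    have hs1 : s ∈ Set.Ioo (-α₁) 0 := ⟨by linarith [hs.1], hs.2⟩
    have ht1 : |t| < α₁ := by
      rw [abs_lt]; exact ⟨by linarith [ht.1], by linarith [ht.2]⟩
    have := hmain1 s t (n s) hs1 ht1 (hn_norm s) (hn_perp s)
    rw [hΦ (s, t)]
    exact this
  · -- near s = L
    intro s t hs ht
    set α := min (min α₁ α₂) (a₀/2) with hαdef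
    have hαα₂ : α ≤ α₂ := le_trans (min_le_left _ _) (min_le_right _ _)
    have hs2 : L - s ∈ Set.Ioo (-α₂) 0 := ⟨by linarith [hs.2], by linarith [hs.1]⟩
    have ht2 : |t| < α₂ := by
      rw [abs_lt]; exact ⟨by linarith [ht.1], by linarith [ht.2]⟩
    have hperp : ⟪n s, deriv g (L - s)⟫ = 0 := by
      rw [hgderiv]
      have : L - (L - s) = s := by ring
      rw [this, inner_neg_right, hn_perp s, neg_zero]
    have := hmain2 (L - s) t (n s) hs2 ht2 (hn_norm s) hperp
    have hgs : g (L - s) = Γ s := by simp [hgdef]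
    have hg0 : g 0 = Γ L := by simp [hgdef]
    rw [hgs, hg0, himg] at this
    rw [hΦ (s, t)]
    exact this
end

section
/- For $s<0$ and $(s,t)\to(0,0)$ one has the asymptotics $d(\Phi(s,t),\gamma)=\sqrt{s^2+t^2}+\mathcal{O}(s^2+t^2)$; more precisely there exist $\varepsilon>0$ and $C>0$ such that $|d(\Phi(s,t),\gamma)-\sqrt{s^2+t^2}|\le C(s^2+t^2)$ whenever $-\varepsilon<s<0$ and $|t|<\varepsilon$. -/
set_option maxHeartbeats 1000000

open Metric Set


lemma frame_orthonormal (Γ n : ℝ → EuclideanSpace ℝ (Fin 2))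
    (hunit : ∀ s, ‖deriv Γ s‖ = 1)
    (hn : ∀ s, n s 0 = -(deriv Γ s 1) ∧ n s 1 = deriv Γ s 0) (s : ℝ) :
    ‖n s‖ = 1 ∧ inner ℝ (deriv Γ s) (n s) = (0 : ℝ) := by
  have hT : inner ℝ (deriv Γ s) (deriv Γ s) = (1:ℝ) := by
    rw [real_inner_self_eq_norm_sq, hunit s]; norm_num
  have hTc : deriv Γ s 0 * deriv Γ s 0 + deriv Γ s 1 * deriv Γ s 1 = 1 := by
    rw [← hT]
    simp only [PiLp.inner_apply, RCLike.inner_apply, Fin.sum_univ_two, conj_trivial]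
  constructor
  · have hnn : inner ℝ (n s) (n s) = (1:ℝ) := by
      simp only [PiLp.inner_apply, RCLike.inner_apply, Fin.sum_univ_two, conj_trivial, (hn s).1, (hn s).2]
      nlinarith
    have := real_inner_self_eq_norm_sq (n s)
    nlinarith [norm_nonneg (n s)]
  · simp [PiLp.inner_apply, RCLike.inner_apply, Fin.sum_univ_two, (hn s).1, (hn s).2]
    ring


lemma taylor_bound (Γ : ℝ → EuclideanSpace ℝ (Fin 2)) (hΓ : ContDiff ℝ 4 Γ)
    (M s σ : ℝ) (hM : 0 ≤ M)
    (hbound : ∀ u ∈ Set.Icc s σ, ‖deriv (deriv Γ) u‖ ≤ M)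
    (hsσ : s ≤ σ) :
    ‖Γ σ - Γ s - (σ - s) • deriv Γ s‖ ≤ M * (σ - s)^2 := by
  have hd1 : Differentiable ℝ Γ := hΓ.differentiable (by norm_num)
  have h3 : ContDiff ℝ 3 (deriv Γ) := by
    have : ContDiff ℝ (3 + 1 : ℕ) Γ := by norm_num at hΓ ⊢; exact_mod_cast hΓ
    exact ((contDiff_succ_iff_deriv).mp (by exact_mod_cast this)).2.2
  have hd2 : Differentiable ℝ (deriv Γ) := h3.differentiable (by norm_num)
  have key : ∀ u ∈ Icc s σ, ‖deriv Γ u - deriv Γ s‖ ≤ M * (σ - s) := by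
    intro u hu
    have h := Convex.norm_image_sub_le_of_norm_hasDerivWithin_le
      (f := deriv Γ) (f' := deriv (deriv Γ)) (s := Icc s σ)
      (fun x _ => (hd2 x).hasDerivAt.hasDerivWithinAt) (fun x hx => hbound x hx)
      (convex_Icc s σ) (left_mem_Icc.mpr hsσ) hu
    have : ‖u - s‖ ≤ σ - s := by
      rw [Real.norm_eq_abs, abs_of_nonneg (by linarith [hu.1])]
      linarith [hu.2]
    calc ‖deriv Γ u - deriv Γ s‖ ≤ M * ‖u - s‖ := h
      _ ≤ M * (σ - s) := by nlinarith
  have hg : ∀ x ∈ Icc s σ, HasDerivWithinAt (fun u => Γ u - u • deriv Γ s)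
      (deriv Γ x - deriv Γ s) (Icc s σ) x := by
    intro x _
    have h1 : HasDerivAt (fun u : ℝ => u • deriv Γ s) (deriv Γ s) x := by
      simpa using (hasDerivAt_id x).smul_const (deriv Γ s)
    exact ((hd1 x).hasDerivAt.sub h1).hasDerivWithinAt
  have h2 := Convex.norm_image_sub_le_of_norm_hasDerivWithin_le
    (s := Icc s σ) hg key (convex_Icc s σ) (left_mem_Icc.mpr hsσ)
    (right_mem_Icc.mpr hsσ)
  have heq : Γ σ - σ • deriv Γ s - (Γ s - s • deriv Γ s)
      = Γ σ - Γ s - (σ - s) • deriv Γ s := by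
    rw [sub_smul]; abel
  rw [heq] at h2
  have : ‖σ - s‖ = σ - s := by
    rw [Real.norm_eq_abs, abs_of_nonneg (by linarith)]
  rw [this] at h2
  nlinarith [h2]

lemma phi_dist_estimate (Γ n : ℝ → EuclideanSpace ℝ (Fin 2))
    (hΓ : ContDiff ℝ 4 Γ)
    (hunit : ∀ s, ‖deriv Γ s‖ = 1)
    (hn : ∀ s, n s 0 = -(deriv Γ s 1) ∧ n s 1 = deriv Γ s 0)
    (M s σ t : ℝ) (hM : 0 ≤ M)
    (hbound : ∀ u ∈ Set.Icc s σ, ‖deriv (deriv Γ) u‖ ≤ M) (hsσ : s ≤ σ) :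
    |‖Γ s + t • n s - Γ σ‖ - Real.sqrt ((σ - s)^2 + t^2)| ≤ M * (σ - s)^2 := by
  obtain ⟨hN1, hTN⟩ := frame_orthonormal Γ n hunit hn s
  set T := deriv Γ s with hT
  set N := n s with hNdef
  set a := σ - s with ha
  set X := t • N - a • T with hX
  have hXnorm : ‖X‖ = Real.sqrt (a^2 + t^2) := by
    have h1 : ‖X‖^2 = a^2 + t^2 := by
      have := norm_sub_sq_real (t • N) (a • T)
      rw [← hX] at this
      have hNT : inner ℝ N T = (0:ℝ) := by rw [real_inner_comm]; exact hTN
      have hTn : ‖T‖ = 1 := hunit s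
      rw [this, norm_smul, norm_smul, real_inner_smul_left, real_inner_smul_right,
        hNT, hTn, hN1]
      simp [mul_pow, sq_abs]
      ring
    have : Real.sqrt (a^2 + t^2) = Real.sqrt (‖X‖^2) := by rw [h1]
    rw [this, Real.sqrt_sq (norm_nonneg X)]
  have hE := taylor_bound Γ hΓ M s σ hM hbound hsσ
  have hsplit : Γ s + t • N - Γ σ = X - (Γ σ - Γ s - a • T) := by
    rw [hX]; abel
  rw [hsplit, ← hXnorm]
  have h3 : |‖X - (Γ σ - Γ s - a • T)‖ - ‖X‖| ≤ ‖X - (Γ σ - Γ s - a • T) - X‖ :=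
    abs_norm_sub_norm_le _ _
  have h4 : X - (Γ σ - Γ s - a • T) - X = -(Γ σ - Γ s - a • T) := by abel
  rw [h4, norm_neg] at h3
  exact h3.trans hE

theorem dist_to_arc_asymptotics_at_endpoint
    (L l₀ a₀ K : ℝ) (hL : 0 < L) (hl₀ : 0 < l₀)
    (Γ : ℝ → EuclideanSpace ℝ (Fin 2))
    (hΓ : ContDiff ℝ 4 Γ)
    (hunit : ∀ s, ‖deriv Γ s‖ = 1)
    (hinj : Set.InjOn Γ (Set.Icc (-l₀) (L + l₀)))
    (n : ℝ → EuclideanSpace ℝ (Fin 2))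
    (hn : ∀ s, n s 0 = -(deriv Γ s 1) ∧ n s 1 = deriv Γ s 0)
    (κ : ℝ → ℝ)
    (hκ : ∀ s, κ s = deriv Γ s 0 * deriv (deriv Γ) s 1 - deriv (deriv Γ) s 0 * deriv Γ s 1)
    (hK : ∀ s ∈ Set.Icc (-l₀) (L + l₀), |κ s| ≤ K)
    (Φ : ℝ × ℝ → EuclideanSpace ℝ (Fin 2))
    (hΦ : ∀ p : ℝ × ℝ, Φ p = Γ p.1 + p.2 • n p.1)
    (ha₀ : 0 < a₀) (ha₀K : 2 * K * a₀ < 1) (ha₀l : a₀ < l₀)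
    (hdiff : Set.InjOn Φ (Set.Ioo (-a₀) (L + a₀) ×ˢ Set.Ioo (-a₀) a₀)) :
    ∃ ε > 0, ∃ C > 0, ∀ s t : ℝ, -ε < s → s < 0 → |t| < ε →
      |Metric.infDist (Φ (s, t)) (Γ '' Set.Ioo 0 L) - Real.sqrt (s ^ 2 + t ^ 2)|
        ≤ C * (s ^ 2 + t ^ 2) := by
  have hΓc : Continuous Γ := hΓ.continuous
  have h3 : ContDiff ℝ 3 (deriv Γ) := by
    have h4 : ContDiff ℝ ((3 : ℕ) + 1) Γ := by exact_mod_cast hΓ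
    exact ((contDiff_succ_iff_deriv).mp (by exact_mod_cast h4)).2.2
  have h2 : ContDiff ℝ 2 (deriv (deriv Γ)) := by
    have h4 : ContDiff ℝ ((2 : ℕ) + 1) (deriv Γ) := by exact_mod_cast h3
    exact ((contDiff_succ_iff_deriv).mp (by exact_mod_cast h4)).2.2
  obtain ⟨B, hB⟩ := (isCompact_Icc (a := -l₀) (b := L + l₀)).exists_bound_of_continuousOn
    h2.continuous.continuousOn
  obtain ⟨M, hMdef⟩ : ∃ x : ℝ, x = max B 0 + 1 := ⟨_, rfl⟩
  have hM1 : 1 ≤ M := by rw [hMdef]; linarith [le_max_right B 0]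
  have hM0 : 0 < M := by linarith
  have hMb : ∀ u ∈ Icc (-l₀) (L + l₀), ‖deriv (deriv Γ) u‖ ≤ M := by
    intro u hu
    have h5 := hB u hu
    have h6 := le_max_left B 0
    rw [hMdef]; linarith
  obtain ⟨δ, hδdef⟩ : ∃ x : ℝ, x = min (min l₀ L) (1 / (2 * M)) := ⟨_, rfl⟩
  have hδ0 : 0 < δ := by
    rw [hδdef]
    exact lt_min (lt_min hl₀ hL) (by positivity)
  have hδM : M * δ ≤ 1/2 := by
    have h1 : δ ≤ 1 / (2 * M) := hδdef ▸ min_le_right _ _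
    have h2' : M * δ ≤ M * (1 / (2*M)) := mul_le_mul_of_nonneg_left h1 hM0.le
    have h3' : M * (1 / (2*M)) = 1/2 := by field_simp
    linarith
  have hδl : δ ≤ l₀ := hδdef ▸ le_trans (min_le_left _ _) (min_le_left _ _)
  have hδL : δ ≤ L := hδdef ▸ le_trans (min_le_left _ _) (min_le_right _ _)
  -- far set
  obtain ⟨m, hmdef⟩ : ∃ x : ℝ, x = infDist (Γ 0) (Γ '' Icc (δ/2) L) := ⟨_, rfl⟩
  have hScomp : IsCompact (Γ '' Icc (δ/2) L) := isCompact_Icc.image hΓc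
  have hSne : (Γ '' Icc (δ/2) L).Nonempty := ⟨Γ L, ⟨L, ⟨by linarith, le_refl L⟩, rfl⟩⟩
  have h0S : Γ 0 ∉ Γ '' Icc (δ/2) L := by
    rintro ⟨σ, hσ, hσeq⟩
    have hσI : σ ∈ Icc (-l₀) (L + l₀) := ⟨by linarith [hσ.1], by linarith [hσ.2]⟩
    have h0I : (0:ℝ) ∈ Icc (-l₀) (L + l₀) := ⟨by linarith, by linarith⟩
    have := hinj hσI h0I hσeq
    linarith [hσ.1, this]
  have hm0 : 0 < m :=
    hmdef ▸ (hScomp.isClosed.notMem_iff_infDist_pos hSne).mp h0S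
  have hmle : ∀ σ, δ/2 ≤ σ → σ ≤ L → m ≤ dist (Γ 0) (Γ σ) := fun σ h1 h2 =>
    hmdef ▸ infDist_le_dist_of_mem ⟨σ, ⟨h1, h2⟩, rfl⟩
  obtain ⟨ε, hεdef⟩ : ∃ x : ℝ, x = min (min (δ/2) (m/4)) (1/(6*M)) := ⟨_, rfl⟩
  have hε0 : 0 < ε := by
    rw [hεdef]
    exact lt_min (lt_min (by linarith) (by linarith)) (by positivity)
  have hεδ : ε ≤ δ/2 := hεdef ▸ le_trans (min_le_left _ _) (min_le_left _ _)
  have hεm : ε ≤ m/4 := hεdef ▸ le_trans (min_le_left _ _) (min_le_right _ _)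
  have hεM : ε ≤ 1/(6*M) := hεdef ▸ min_le_right _ _
  refine ⟨ε, hε0, 4*M, by positivity, ?_⟩
  intro s t hs1 hs2 ht
  have hsI : -l₀ ≤ s := by linarith
  obtain ⟨r, hrdef⟩ : ∃ x : ℝ, x = Real.sqrt (s^2 + t^2) := ⟨_, rfl⟩
  have hst0 : 0 < s^2 + t^2 := by
    nlinarith [mul_pos (neg_pos.mpr hs2) (neg_pos.mpr hs2), sq_nonneg t]
  have hr2 : r^2 = s^2 + t^2 := by rw [hrdef]; exact Real.sq_sqrt hst0.le
  have hr0 : 0 < r := hrdef ▸ Real.sqrt_pos.mpr hst0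
  have hrs : -s ≤ r := by
    rw [hrdef]
    have h1 : -s = Real.sqrt ((-s)^2) := (Real.sqrt_sq (by linarith)).symm
    rw [h1]
    exact Real.sqrt_le_sqrt (by nlinarith [sq_nonneg t])
  have hrt : |t| ≤ r := by
    rw [hrdef, ← Real.sqrt_sq_eq_abs]
    exact Real.sqrt_le_sqrt (by nlinarith [sq_nonneg s])
  have hrε : r ≤ 1.5 * ε := by
    have hts := abs_lt.mp ht
    have h1 : s^2 + t^2 ≤ (1.5*ε)^2 := by
      nlinarith [mul_self_lt_mul_self (by linarith : (0:ℝ) ≤ -s)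
          (by linarith [neg_lt.mp hs1] : -s < ε),
        mul_self_lt_mul_self (abs_nonneg t) ht, abs_mul_abs_self t, hε0.le]
    calc r = Real.sqrt (s^2 + t^2) := hrdef
      _ ≤ Real.sqrt ((1.5*ε)^2) := Real.sqrt_le_sqrt h1
      _ = 1.5*ε := Real.sqrt_sq (by linarith)
  have hΦst : Φ (s, t) = Γ s + t • n s := hΦ (s, t)
  -- upper bound
  have hup : dist (Φ (s, t)) (Γ 0) ≤ r + M * r^2 := by
    have hbd : ∀ u ∈ Icc s 0, ‖deriv (deriv Γ) u‖ ≤ M := fun u hu =>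
      hMb u ⟨by linarith [hu.1], by linarith [hu.2]⟩
    have hest := phi_dist_estimate Γ n hΓ hunit hn M s 0 t hM0.le hbd hs2.le
    rw [dist_eq_norm, hΦst]
    have he1 : ((0:ℝ) - s)^2 + t^2 = s^2 + t^2 := by ring
    have he2 : M * ((0:ℝ) - s)^2 = M * s^2 := by ring
    rw [he1, he2, ← hrdef] at hest
    have habs := abs_le.mp hest
    have h5 : M * s^2 ≤ M * r^2 :=
      mul_le_mul_of_nonneg_left (by nlinarith [sq_nonneg t]) hM0.le
    linarith [habs.2]
  have hmem0 : Γ 0 ∈ closure (Γ '' Ioo 0 L) := by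
    apply image_closure_subset_closure_image hΓc
    exact ⟨0, by rw [closure_Ioo hL.ne]; exact ⟨le_refl 0, hL.le⟩, rfl⟩
  have hupper : infDist (Φ (s, t)) (Γ '' Ioo 0 L) ≤ r + M * r^2 := by
    rw [← Metric.infDist_closure]
    exact le_trans (infDist_le_dist_of_mem hmem0) hup
  -- lower bound
  have hMr : M * r ≤ 1/4 := by
    have h5 : M * r ≤ M * (1.5 * ε) := mul_le_mul_of_nonneg_left hrε hM0.le
    have h6 : M * ε ≤ M * (1/(6*M)) := mul_le_mul_of_nonneg_left hεM hM0.le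
    have h7 : M * (1/(6*M)) = 1/6 := by field_simp
    nlinarith
  have hlow : ∀ y ∈ Γ '' Ioo 0 L, r - 4*M*r^2 ≤ dist (Φ (s, t)) y := by
    rintro y ⟨σ, hσ, rfl⟩
    by_cases hcase : σ < δ/2
    · -- near regime
      have hbd : ∀ u ∈ Icc s σ, ‖deriv (deriv Γ) u‖ ≤ M := fun u hu =>
        hMb u ⟨by linarith [hu.1], by linarith [hu.2, hσ.2]⟩
      have hsσ : s ≤ σ := by linarith [hσ.1]
      have hest := phi_dist_estimate Γ n hΓ hunit hn M s σ t hM0.le hbd hsσ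
      rw [dist_eq_norm, hΦst]
      obtain ⟨a, hadef⟩ : ∃ x : ℝ, x = σ - s := ⟨_, rfl⟩
      rw [← hadef] at hest
      have ha0 : 0 < a := by rw [hadef]; linarith [hσ.1]
      have has : -s ≤ a := by rw [hadef]; linarith [hσ.1]
      have haδ : a < δ := by rw [hadef]; linarith
      have hsq : r ≤ Real.sqrt (a^2 + t^2) := by
        rw [hrdef]
        apply Real.sqrt_le_sqrt
        nlinarith [mul_nonneg (by linarith : (0:ℝ) ≤ a + s) (by linarith : (0:ℝ) ≤ a - s)]
      have habs := abs_le.mp hest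
      by_cases h2r : a ≤ 2*r
      · have h4 : a^2 ≤ 4*r^2 := by
          nlinarith [mul_nonneg (by linarith : (0:ℝ) ≤ 2*r - a) (by linarith : (0:ℝ) ≤ 2*r + a)]
        have h5 : M * a^2 ≤ M * (4*r^2) := mul_le_mul_of_nonneg_left h4 hM0.le
        linarith [habs.1, hsq]
      · have hsa : a ≤ Real.sqrt (a^2 + t^2) := by
          have h1 : a = Real.sqrt (a^2) := (Real.sqrt_sq ha0.le).symm
          nth_rewrite 1 [h1]
          exact Real.sqrt_le_sqrt (by nlinarith [sq_nonneg t])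
        have hMa : M * a ≤ 1/2 := le_trans (mul_le_mul_of_nonneg_left haδ.le hM0.le) hδM
        have h6 : M * a^2 ≤ (1/2) * a := by
          nlinarith [mul_le_mul_of_nonneg_right hMa ha0.le]
        have h7 : 0 ≤ 4*M*r^2 := mul_nonneg (by linarith) (sq_nonneg r)
        linarith [habs.1, hsa]
    · -- far regime
      push_neg at hcase
      have hm1 := hmle σ hcase hσ.2.le
      have htri : dist (Γ 0) (Γ σ) ≤ dist (Φ (s,t)) (Γ 0) + dist (Φ (s,t)) (Γ σ) := by
        rw [dist_comm (Φ (s,t)) (Γ 0)]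
        exact dist_triangle _ _ _
      have hrm : r ≤ 1.5 * (m/4) := by linarith
      have h8 : M*r*r ≤ (1/4)*r := mul_le_mul_of_nonneg_right hMr hr0.le
      have h9 : 0 ≤ M*r^2 := mul_nonneg hM0.le (sq_nonneg r)
      nlinarith [hup]
  have hne : (Γ '' Ioo 0 L).Nonempty := ⟨Γ (L/2), ⟨L/2, ⟨by linarith, by linarith⟩, rfl⟩⟩
  have hlower : r - 4*M*r^2 ≤ infDist (Φ (s, t)) (Γ '' Ioo 0 L) := by
    haveI := hne.to_subtype
    rw [Metric.infDist_eq_iInf]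
    exact le_ciInf fun y => hlow y y.2
  have h0 : 0 ≤ M*r^2 := mul_nonneg hM0.le (sq_nonneg r)
  rw [← hrdef, abs_le, ← hr2]
  constructor
  · linarith [hlower]
  · linarith [hupper]
end

section
/- There exist $\alpha_0\in(0,a_0)$ and $C>0$ such that for all $\alpha\in(0,\alpha_0)$ and all $x$ on the boundary of the curved rectangle $\Pi(\alpha)=\Phi(P(\alpha))$ one has $d(x,\gamma)\ge\alpha-C\alpha^2$. -/
open ContinuousLinearMap

private lemma esq (x : EuclideanSpace ℝ (Fin 2)) : ‖x‖ ^ 2 = x 0 ^ 2 + x 1 ^ 2 := by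
  rw [EuclideanSpace.norm_eq, Real.sq_sqrt (by positivity)]
  simp [Fin.sum_univ_two, sq_abs]

private noncomputable def Jmap : EuclideanSpace ℝ (Fin 2) →L[ℝ] EuclideanSpace ℝ (Fin 2) :=
  LinearMap.toContinuousLinearMap
    { toFun := fun x => WithLp.toLp 2 ![-(x 1), x 0]
      map_add' := by intro x y; ext i; fin_cases i <;> simp [PiLp.add_apply] <;> ring
      map_smul' := by intro c x; ext i; fin_cases i <;> simp [PiLp.smul_apply, smul_eq_mul]
        <;> ring }

@[simp] private lemma Jmap_apply_zero (x : EuclideanSpace ℝ (Fin 2)) : Jmap x 0 = -(x 1) := rfl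
@[simp] private lemma Jmap_apply_one (x : EuclideanSpace ℝ (Fin 2)) : Jmap x 1 = x 0 := rfl

set_option maxHeartbeats 8000000 in
theorem dist_from_boundary_of_tube
    (L l₀ a₀ K : ℝ) (hL : 0 < L) (hl₀ : 0 < l₀)
    (Γ : ℝ → EuclideanSpace ℝ (Fin 2))
    (hΓ : ContDiff ℝ 4 Γ)
    (hunit : ∀ s, ‖deriv Γ s‖ = 1)
    (hinj : Set.InjOn Γ (Set.Icc (-l₀) (L + l₀)))
    (n : ℝ → EuclideanSpace ℝ (Fin 2))
    (hn : ∀ s, n s 0 = -(deriv Γ s 1) ∧ n s 1 = deriv Γ s 0)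
    (κ : ℝ → ℝ)
    (hκ : ∀ s, κ s = deriv Γ s 0 * deriv (deriv Γ) s 1 - deriv (deriv Γ) s 0 * deriv Γ s 1)
    (hK : ∀ s ∈ Set.Icc (-l₀) (L + l₀), |κ s| ≤ K)
    (Φ : ℝ × ℝ → EuclideanSpace ℝ (Fin 2))
    (hΦ : ∀ p : ℝ × ℝ, Φ p = Γ p.1 + p.2 • n p.1)
    (ha₀ : 0 < a₀) (ha₀K : 2 * K * a₀ < 1) (ha₀l : a₀ < l₀)
    (hdiff : Set.InjOn Φ (Set.Ioo (-a₀) (L + a₀) ×ˢ Set.Ioo (-a₀) a₀)) :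
    ∃ α₀, 0 < α₀ ∧ α₀ < a₀ ∧ ∃ C > 0, ∀ α : ℝ, 0 < α → α < α₀ →
      ∀ x ∈ frontier (Φ '' (Set.Ioo (-α) (L + α) ×ˢ Set.Ioo (-α) α)),
        α - C * α ^ 2 ≤ Metric.infDist x (Γ '' Set.Ioo 0 L) := by
  classical
  set I := Set.Icc (-l₀) (L + l₀) with hI
  have hK0 : 0 ≤ K := le_trans (abs_nonneg _) (hK 0 ⟨by linarith, by linarith⟩)
  -- basic differentiability facts
  have h4 : (4 : WithTop ℕ∞) = 3 + 1 := by norm_num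
  have hΓd : Differentiable ℝ Γ := hΓ.differentiable (by norm_num)
  have hΓ' : ContDiff ℝ 3 (deriv Γ) := ((contDiff_succ_iff_deriv).mp (h4 ▸ hΓ)).2.2
  have hΓ'd : Differentiable ℝ (deriv Γ) := hΓ'.differentiable (by norm_num)
  have hd1 : ∀ s, HasDerivAt Γ (deriv Γ s) s := fun s => (hΓd s).hasDerivAt
  have hd2 : ∀ s, HasDerivAt (deriv Γ) (deriv (deriv Γ) s) s := fun s => (hΓ'd s).hasDerivAt
  have hc : ∀ (s : ℝ) (i : Fin 2),
      HasDerivAt (fun u => deriv Γ u i) (deriv (deriv Γ) s i) s := fun s i => by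
    have := (EuclideanSpace.proj i).hasFDerivAt.comp_hasDerivAt s (hd2 s)
    simpa [Function.comp_def] using this
  -- unit tangent in coordinates
  have hcd : ∀ s, deriv Γ s 0 ^ 2 + deriv Γ s 1 ^ 2 = 1 := fun s => by
    have h := esq (deriv Γ s); rw [hunit s] at h; rw [← h]; norm_num
  -- orthogonality of Γ'' and Γ'
  have horth : ∀ s, deriv Γ s 0 * deriv (deriv Γ) s 0 +
      deriv Γ s 1 * deriv (deriv Γ) s 1 = 0 := by
    intro s
    have h1 : HasDerivAt (fun u => deriv Γ u 0 ^ 2 + deriv Γ u 1 ^ 2)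
        ((2 : ℕ) * deriv Γ s 0 ^ 1 * deriv (deriv Γ) s 0 +
          (2 : ℕ) * deriv Γ s 1 ^ 1 * deriv (deriv Γ) s 1) s :=
      ((hc s 0).pow 2).add ((hc s 1).pow 2)
    have h2 : (fun u => deriv Γ u 0 ^ 2 + deriv Γ u 1 ^ 2) = fun _ => (1 : ℝ) :=
      funext fun u => hcd u
    rw [h2] at h1
    have h3 := h1.unique (hasDerivAt_const s 1)
    push_cast at h3
    nlinarith [h3]
  -- Frenet relations
  have hders : ∀ s, deriv (deriv Γ) s 0 = -(κ s * deriv Γ s 1) ∧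
      deriv (deriv Γ) s 1 = κ s * deriv Γ s 0 := by
    intro s
    constructor
    · rw [hκ s]
      linear_combination (deriv Γ s 0) * horth s - deriv (deriv Γ) s 0 * hcd s
    · rw [hκ s]
      linear_combination (deriv Γ s 1) * horth s - deriv (deriv Γ) s 1 * hcd s
  -- norm of second derivative
  have hnorm'' : ∀ s, ‖deriv (deriv Γ) s‖ = |κ s| := by
    intro s
    have h : ‖deriv (deriv Γ) s‖ ^ 2 = κ s ^ 2 := by
      rw [esq, (hders s).1, (hders s).2]
      linear_combination (κ s) ^ 2 * hcd s
    rw [← Real.sqrt_sq (norm_nonneg _), h, Real.sqrt_sq_eq_abs]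
  -- norm of n
  have hn1 : ∀ s, ‖n s‖ = 1 := by
    intro s
    have h : ‖n s‖ ^ 2 = 1 := by
      rw [esq, (hn s).1, (hn s).2]
      linear_combination hcd s
    rw [← Real.sqrt_sq (norm_nonneg _), h, Real.sqrt_one]
  -- Lipschitz estimate for the tangent
  have hLip : ∀ u ∈ I, ∀ s ∈ I, ‖deriv Γ u - deriv Γ s‖ ≤ K * |u - s| := by
    intro u hu s hs
    have := Convex.norm_image_sub_le_of_norm_hasDerivWithin_le
      (f := deriv Γ) (f' := deriv (deriv Γ)) (s := I) (C := K)
      (fun w _ => (hd2 w).hasDerivWithinAt)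
      (fun w hw => by rw [hnorm'']; exact hK w hw) (convex_Icc _ _) hs hu
    simpa [Real.norm_eq_abs] using this
  -- Taylor estimate
  have hTaylor : ∀ s ∈ I, ∀ u ∈ I,
      ‖Γ u - Γ s - (u - s) • deriv Γ s‖ ≤ K * (u - s) ^ 2 := by
    intro s hs u hu
    set g := fun w => Γ w - Γ s - (w - s) • deriv Γ s with hg
    have hgd : ∀ w, HasDerivAt g (deriv Γ w - deriv Γ s) w := fun w => by
      have := ((hd1 w).sub_const (Γ s)).sub
        (((hasDerivAt_id w).sub_const s).smul_const (deriv Γ s))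
      simpa [hg, Pi.sub_def] using this
    have hsub : Set.uIcc s u ⊆ I := by
      rw [Set.uIcc_eq_union]
      exact Set.union_subset (Set.Icc_subset_Icc hs.1 hu.2) (Set.Icc_subset_Icc hu.1 hs.2)
    have hb : ∀ w ∈ Set.uIcc s u, ‖deriv Γ w - deriv Γ s‖ ≤ K * |u - s| := by
      intro w hw
      refine le_trans (hLip w (hsub hw) s hs) ?_
      have hws : |w - s| ≤ |u - s| := by
        rw [Set.mem_uIcc] at hw
        rw [abs_sub_le_iff]
        rcases hw with ⟨h1, h2⟩ | ⟨h1, h2⟩ <;>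
          constructor <;> cases abs_cases (u - s) <;> linarith
      exact mul_le_mul_of_nonneg_left hws hK0
    have := Convex.norm_image_sub_le_of_norm_hasDerivWithin_le
      (f := g) (f' := fun w => deriv Γ w - deriv Γ s) (s := Set.uIcc s u) (C := K * |u - s|)
      (fun w _ => (hgd w).hasDerivWithinAt) hb (convex_uIcc _ _)
      Set.left_mem_uIcc Set.right_mem_uIcc
    have hgs : g s = 0 := by simp [hg]
    rw [hgs, sub_zero] at this
    calc ‖g u‖ ≤ K * |u - s| * ‖u - s‖ := this
      _ = K * (u - s) ^ 2 := by rw [Real.norm_eq_abs, mul_assoc, ← abs_mul, ← sq, abs_of_nonneg (sq_nonneg _)]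
  -- norm of tangential-normal combinations
  have hcomb : ∀ (s a b : ℝ), ‖a • deriv Γ s + b • n s‖ ^ 2 = a ^ 2 + b ^ 2 := by
    intro s a b
    rw [esq]
    have h0 : (a • deriv Γ s + b • n s) 0 = a * deriv Γ s 0 + b * n s 0 := rfl
    have h1 : (a • deriv Γ s + b • n s) 1 = a * deriv Γ s 1 + b * n s 1 := rfl
    rw [h0, h1, (hn s).1, (hn s).2]
    linear_combination (a ^ 2 + b ^ 2) * hcd s
  have hns : ∀ (s t v : ℝ), ‖t • n s - v • deriv Γ s‖ = Real.sqrt (t ^ 2 + v ^ 2) := by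
    intro s t v
    have he : t • n s - v • deriv Γ s = (-v) • deriv Γ s + t • n s := by
      rw [neg_smul]; abel
    have h : ‖t • n s - v • deriv Γ s‖ ^ 2 = t ^ 2 + v ^ 2 := by
      rw [he, hcomb]; ring
    rw [← Real.sqrt_sq (norm_nonneg _), h]
  -- key pointwise lower bound
  have hkey : ∀ s ∈ I, ∀ u ∈ I, ∀ t : ℝ,
      Real.sqrt (t ^ 2 + (u - s) ^ 2) - K * (u - s) ^ 2 ≤ ‖Φ (s, t) - Γ u‖ := by
    intro s hs u hu t
    have hsplit : Φ (s, t) - Γ u = (t • n s - (u - s) • deriv Γ s) -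
        (Γ u - Γ s - (u - s) • deriv Γ s) := by
      rw [hΦ (s, t)]; abel
    calc Real.sqrt (t ^ 2 + (u - s) ^ 2) - K * (u - s) ^ 2
        ≤ ‖t • n s - (u - s) • deriv Γ s‖ - ‖Γ u - Γ s - (u - s) • deriv Γ s‖ := by
          rw [hns]
          linarith [hTaylor s hs u hu]
      _ ≤ ‖Φ (s, t) - Γ u‖ := by rw [hsplit]; exact norm_sub_norm_le _ _
  -- the function n as a composition
  have hnfun : n = fun w => Jmap (deriv Γ w) := by
    funext w
    ext i
    fin_cases i
    · simpa using (hn w).1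
    · simpa using (hn w).2
  have hncont : Continuous n := by
    rw [hnfun]; exact Jmap.continuous.comp hΓ'.continuous
  have hΦfun : Φ = fun p : ℝ × ℝ => Γ p.1 + p.2 • n p.1 := funext hΦ
  have hΦcont : Continuous Φ := by
    rw [hΦfun]
    exact (hΓ.continuous.comp continuous_fst).add
      (continuous_snd.smul (hncont.comp continuous_fst))
  -- choice of δ
  set δ := 1 / (4 * (K + 1)) with hδdef
  have hδ0 : 0 < δ := by positivity
  have hδK : 4 * K * δ ≤ 1 := by
    rw [hδdef]
    rw [div_eq_inv_mul, mul_one]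
    rw [mul_comm]
    rw [inv_mul_le_iff₀ (by positivity)]
    nlinarith [hK0]
  -- uniform separation of far points of the curve
  obtain ⟨ε, hε0, hεb⟩ : ∃ ε > 0, ∀ s ∈ I, ∀ u ∈ I, δ ≤ |s - u| → ε ≤ ‖Γ s - Γ u‖ := by
    set D := {p : ℝ × ℝ | p.1 ∈ I ∧ p.2 ∈ I ∧ δ ≤ |p.1 - p.2|} with hD
    have hDeq : D = (I ×ˢ I) ∩ {p : ℝ × ℝ | δ ≤ |p.1 - p.2|} := by
      ext p; simp [hD, Set.mem_prod]; tauto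
    have hDclosed : IsClosed D := by
      rw [hDeq]
      exact (isClosed_Icc.prod isClosed_Icc).inter
        (isClosed_le continuous_const ((continuous_fst.sub continuous_snd).abs))
    have hDc : IsCompact D := (isCompact_Icc.prod isCompact_Icc).of_isClosed_subset hDclosed
      (by rw [hDeq]; exact Set.inter_subset_left)
    rcases Set.eq_empty_or_nonempty D with hDe | hDne
    · refine ⟨1, one_pos, fun s hs u hu hd => absurd ?_ (Set.eq_empty_iff_forall_notMem.mp hDe (s, u))⟩
      exact ⟨hs, hu, hd⟩
    · obtain ⟨p, hp, hmin⟩ := hDc.exists_isMinOn hDne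
        ((hΓ.continuous.comp continuous_fst).sub (hΓ.continuous.comp continuous_snd)).norm.continuousOn
      refine ⟨‖Γ p.1 - Γ p.2‖, ?_, fun s hs u hu hd => isMinOn_iff.mp hmin (s, u) ⟨hs, hu, hd⟩⟩
      simp only [gt_iff_lt, norm_pos_iff, ne_eq, sub_eq_zero]
      intro h
      have hpe : p.1 = p.2 := hinj hp.1 hp.2.1 h
      have := hp.2.2
      rw [hpe, sub_self, abs_zero] at this
      linarith
  -- the constants
  refine ⟨min (min (a₀ / 2) δ) (ε / 2), by positivity, ?_, K + 1, by positivity, ?_⟩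
  · calc min (min (a₀ / 2) δ) (ε / 2) ≤ a₀ / 2 := le_trans (min_le_left _ _) (min_le_left _ _)
      _ < a₀ := by linarith
  intro α hα0 hαα₀ x hx
  have hαa₀ : α < a₀ := by
    have := lt_of_lt_of_le hαα₀ (le_trans (min_le_left _ _) (min_le_left _ _)); linarith
  have hαδ : α ≤ δ := le_of_lt (lt_of_lt_of_le hαα₀ (le_trans (min_le_left _ _) (min_le_right _ _)))
  have hαε : α ≤ ε / 2 := le_of_lt (lt_of_lt_of_le hαα₀ (min_le_right _ _))
  have hαl : α < l₀ := lt_trans hαa₀ ha₀l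
  set S := Set.Ioo (-α) (L + α) ×ˢ Set.Ioo (-α) α with hS
  -- membership in I for relevant parameters
  have hmemI : ∀ w : ℝ, -α ≤ w → w ≤ L + α → w ∈ I := fun w h1 h2 =>
    ⟨by linarith, by linarith⟩
  -- openness of the image of S
  have hopen : IsOpen (Φ '' S) := by
    rw [isOpen_iff_mem_nhds]
    rintro _ ⟨p, hp, rfl⟩
    have hsaI : p.1 ∈ I := hmemI p.1 (le_of_lt hp.1.1) (le_of_lt hp.1.2)
    have htα : |p.2| < α := abs_lt.mpr ⟨hp.2.1, hp.2.2⟩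
    have htκ : 1 - p.2 * κ p.1 > 1 / 2 := by
      have h1 : |p.2 * κ p.1| ≤ α * K := by
        rw [abs_mul]
        exact mul_le_mul (le_of_lt htα) (hK _ hsaI) (abs_nonneg _) (by linarith)
      have h2 : α * K < 1 / 2 := by nlinarith
      cases abs_cases (p.2 * κ p.1) <;> linarith
    -- strict derivative data
    have hΓs : HasStrictDerivAt Γ (deriv Γ p.1) p.1 := hΓ.hasStrictDerivAt (by norm_num)
    have hΓ's : HasStrictDerivAt (deriv Γ) (deriv (deriv Γ) p.1) p.1 :=
      hΓ'.hasStrictDerivAt (by norm_num)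
    have hnstrict : HasStrictDerivAt n (Jmap (deriv (deriv Γ) p.1)) p.1 := by
      rw [hnfun]
      exact Jmap.hasStrictFDerivAt.comp_hasStrictDerivAt _ hΓ's
    have hfst : HasStrictFDerivAt (fun q : ℝ × ℝ => Γ q.1)
        (((1 : ℝ →L[ℝ] ℝ).smulRight (deriv Γ p.1)).comp (fst ℝ ℝ ℝ)) p :=
      HasStrictFDerivAt.comp p hΓs hasStrictFDerivAt_fst
    have hsnd2 : HasStrictFDerivAt (fun q : ℝ × ℝ => n q.1)
        (((1 : ℝ →L[ℝ] ℝ).smulRight (Jmap (deriv (deriv Γ) p.1))).comp (fst ℝ ℝ ℝ)) p :=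
      HasStrictFDerivAt.comp p hnstrict hasStrictFDerivAt_fst
    set D₀ : ℝ × ℝ →L[ℝ] EuclideanSpace ℝ (Fin 2) :=
      (((1 : ℝ →L[ℝ] ℝ).smulRight (deriv Γ p.1)).comp (fst ℝ ℝ ℝ)) +
        (p.2 • (((1 : ℝ →L[ℝ] ℝ).smulRight (Jmap (deriv (deriv Γ) p.1))).comp (fst ℝ ℝ ℝ)) +
          (snd ℝ ℝ ℝ).smulRight (n p.1)) with hD₀
    have hΦstrict : HasStrictFDerivAt Φ D₀ p := by
      rw [hΦfun, hD₀]
      exact hfst.add (hasStrictFDerivAt_snd.smul hsnd2)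
    -- D₀ explicitly
    have hD₀app : ∀ v : ℝ × ℝ, D₀ v =
        (v.1 * (1 - p.2 * κ p.1)) • deriv Γ p.1 + v.2 • n p.1 := by
      intro v
      have hJA : Jmap (deriv (deriv Γ) p.1) = (-(κ p.1)) • deriv Γ p.1 := by
        ext i
        fin_cases i
        · show -(deriv (deriv Γ) p.1 1) = (-(κ p.1)) * deriv Γ p.1 0
          rw [(hders p.1).2]; ring
        · show deriv (deriv Γ) p.1 0 = (-(κ p.1)) * deriv Γ p.1 1
          rw [(hders p.1).1]; ring
      rw [hD₀]
      simp only [ContinuousLinearMap.add_apply, ContinuousLinearMap.coe_smul',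
        Pi.smul_apply, ContinuousLinearMap.comp_apply, ContinuousLinearMap.coe_fst',
        ContinuousLinearMap.coe_snd', ContinuousLinearMap.smulRight_apply,
        ContinuousLinearMap.one_apply, hJA]
      module
    have hbij : Function.Bijective D₀ := by
      have hker : ∀ v : ℝ × ℝ, D₀ v = 0 → v = 0 := by
        intro v hv
        rw [hD₀app] at hv
        have hnv : ‖(v.1 * (1 - p.2 * κ p.1)) • deriv Γ p.1 + v.2 • n p.1‖ ^ 2 = 0 := by
          rw [hv]; simp
        rw [hcomb] at hnv
        have hv1 : v.1 * (1 - p.2 * κ p.1) = 0 := by nlinarith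
        have hv2 : v.2 = 0 := by nlinarith
        have hv1' : v.1 = 0 := by
          rcases mul_eq_zero.mp hv1 with h | h
          · exact h
          · linarith
        exact Prod.ext hv1' hv2
      have hinjD : Function.Injective D₀ := by
        intro v w hvw
        have := hker (v - w) (by rw [map_sub, hvw, sub_self])
        exact sub_eq_zero.mp this
      refine ⟨hinjD, ?_⟩
      have hfr : Module.finrank ℝ (ℝ × ℝ) = Module.finrank ℝ (EuclideanSpace ℝ (Fin 2)) := by
        simp
      exact (LinearMap.injective_iff_surjective_of_finrank_eq_finrank hfr).mp
        (hinjD : Function.Injective (D₀ : ℝ × ℝ →ₗ[ℝ] EuclideanSpace ℝ (Fin 2)))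
    have hmap : Filter.map Φ (nhds p) = nhds (Φ p) := by
      set e := LinearEquiv.ofBijective (D₀ : ℝ × ℝ →ₗ[ℝ] EuclideanSpace ℝ (Fin 2)) hbij with he
      have hDe : ((e.toContinuousLinearEquiv : (ℝ × ℝ) ≃L[ℝ] EuclideanSpace ℝ (Fin 2)) :
          ℝ × ℝ →L[ℝ] EuclideanSpace ℝ (Fin 2)) = D₀ := by
        apply ContinuousLinearMap.ext
        intro v
        have := congrFun (LinearEquiv.coe_toContinuousLinearEquiv' e) v
        simpa [he] using this
      exact (hDe ▸ hΦstrict : HasStrictFDerivAt Φ _ p).map_nhds_eq_of_equiv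
    rw [← hmap]
    exact Filter.image_mem_map ((isOpen_Ioo.prod isOpen_Ioo).mem_nhds hp)
  -- the frontier point comes from the frontier of S
  have hSsub : S ⊆ Set.Icc (-α) (L + α) ×ˢ Set.Icc (-α) α :=
    Set.prod_mono Set.Ioo_subset_Icc_self Set.Ioo_subset_Icc_self
  have hclosure : closure (Φ '' S) ⊆ Φ '' (Set.Icc (-α) (L + α) ×ˢ Set.Icc (-α) α) := by
    apply closure_minimal (Set.image_mono hSsub)
    exact ((isCompact_Icc.prod isCompact_Icc).image hΦcont).isClosed
  have hx1 : x ∈ closure (Φ '' S) := frontier_subset_closure hx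
  have hx2 : x ∉ Φ '' S := by
    intro h
    exact hx.2 (by rwa [hopen.interior_eq])
  obtain ⟨p, hp, rfl⟩ := hclosure hx1
  have hpS : p ∉ S := fun h => hx2 ⟨p, h, rfl⟩
  have hs1 : p.1 ∈ Set.Icc (-α) (L + α) := hp.1
  have ht1 : p.2 ∈ Set.Icc (-α) α := hp.2
  have hcases : p.2 = -α ∨ p.2 = α ∨ p.1 = -α ∨ p.1 = L + α := by
    by_contra hcon
    push_neg at hcon
    apply hpS
    refine ⟨⟨lt_of_le_of_ne hs1.1 (Ne.symm hcon.2.2.1), lt_of_le_of_ne hs1.2 hcon.2.2.2⟩,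
      ⟨lt_of_le_of_ne ht1.1 (Ne.symm hcon.1), lt_of_le_of_ne ht1.2 hcon.2.1⟩⟩
  have hsI : p.1 ∈ I := hmemI p.1 hs1.1 hs1.2
  have htabs : |p.2| ≤ α := abs_le.mpr ⟨ht1.1, ht1.2⟩
  -- reduce to pointwise distance bound
  have hneS : (Γ '' Set.Ioo 0 L).Nonempty :=
    ⟨Γ (L / 2), ⟨L / 2, ⟨by linarith, by linarith⟩, rfl⟩⟩
  by_contra hlt
  push_neg at hlt
  rw [Metric.infDist_lt_iff hneS] at hlt
  obtain ⟨y, ⟨u, hu, rfl⟩, hy⟩ := hlt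
  have huI : u ∈ I := ⟨by linarith [hu.1], by linarith [hu.2]⟩
  rw [dist_eq_norm] at hy
  -- show the pointwise lower bound, contradiction with hy
  have hpeta : Φ p = Φ (p.1, p.2) := by rw [Prod.mk.eta]
  set v := u - p.1 with hv
  have hbound : α - (K + 1) * α ^ 2 ≤ ‖Φ p - Γ u‖ := by
    rcases le_or_gt δ |v| with hfar | hnear
    · -- far case
      have hsep : ε ≤ ‖Γ p.1 - Γ u‖ := by
        apply hεb p.1 hsI u huI
        rw [abs_sub_comm]; exact hfar
      have htri : ‖Γ p.1 - Γ u‖ ≤ ‖Φ p - Γ u‖ + ‖p.2 • n p.1‖ := by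
        have hrw : Γ p.1 - Γ u = (Φ p - Γ u) - p.2 • n p.1 := by
          rw [hΦ p]; abel
        rw [hrw]
        exact norm_sub_le _ _
      have hsn : ‖p.2 • n p.1‖ ≤ α := by
        rw [norm_smul, hn1, mul_one, Real.norm_eq_abs]; exact htabs
      nlinarith [hK0, sq_nonneg α]
    · -- near case
      have hbase := hkey p.1 hsI u huI p.2
      rw [← hpeta] at hbase
      rw [← hv] at hbase
      have hvle : |v| ≤ δ := le_of_lt hnear
      rcases hcases with ht | ht | hs | hs
      · -- |t| = α
        have htsq : p.2 ^ 2 = α ^ 2 := by rw [ht]; ring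
        have hsq := Real.sq_sqrt (show (0:ℝ) ≤ p.2 ^ 2 + v ^ 2 by positivity)
        set Sq := Real.sqrt (p.2 ^ 2 + v ^ 2) with hSq
        have hSq0 : 0 ≤ Sq := Real.sqrt_nonneg _
        have hSgeα : α ≤ Sq := by
          rw [hSq, htsq]
          calc α = Real.sqrt (α ^ 2) := by rw [Real.sqrt_sq (le_of_lt hα0)]
            _ ≤ _ := Real.sqrt_le_sqrt (by nlinarith [sq_nonneg v])
        have hSle : Sq ≤ α + |v| := by
          rw [hSq, htsq]
          rw [show α + |v| = Real.sqrt ((α + |v|) ^ 2) by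
            rw [Real.sqrt_sq (by positivity)]]
          apply Real.sqrt_le_sqrt
          nlinarith [abs_nonneg v, sq_abs v]
        have hfac : 0 ≤ (Sq - α) * (1 - K * (Sq + α)) := by
          apply mul_nonneg (by linarith)
          have : K * (Sq + α) ≤ K * (3 * δ) :=
            mul_le_mul_of_nonneg_left (by linarith) hK0
          nlinarith
        have hvsq : v ^ 2 = Sq ^ 2 - α ^ 2 := by rw [hsq, htsq]; ring
        have : α ≤ Sq - K * v ^ 2 := by nlinarith
        nlinarith [sq_nonneg α, mul_nonneg hK0 (sq_nonneg α), hbase]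
      · -- t = α (same as above)
        have htsq : p.2 ^ 2 = α ^ 2 := by rw [ht]
        have hsq := Real.sq_sqrt (show (0:ℝ) ≤ p.2 ^ 2 + v ^ 2 by positivity)
        set Sq := Real.sqrt (p.2 ^ 2 + v ^ 2) with hSq
        have hSq0 : 0 ≤ Sq := Real.sqrt_nonneg _
        have hSgeα : α ≤ Sq := by
          rw [hSq, htsq]
          calc α = Real.sqrt (α ^ 2) := by rw [Real.sqrt_sq (le_of_lt hα0)]
            _ ≤ _ := Real.sqrt_le_sqrt (by nlinarith [sq_nonneg v])
        have hSle : Sq ≤ α + |v| := by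
          rw [hSq, htsq]
          rw [show α + |v| = Real.sqrt ((α + |v|) ^ 2) by
            rw [Real.sqrt_sq (by positivity)]]
          apply Real.sqrt_le_sqrt
          nlinarith [abs_nonneg v, sq_abs v]
        have hfac : 0 ≤ (Sq - α) * (1 - K * (Sq + α)) := by
          apply mul_nonneg (by linarith)
          have : K * (Sq + α) ≤ K * (3 * δ) :=
            mul_le_mul_of_nonneg_left (by linarith) hK0
          nlinarith
        have hvsq : v ^ 2 = Sq ^ 2 - α ^ 2 := by rw [hsq, htsq]; ring
        have : α ≤ Sq - K * v ^ 2 := by nlinarith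
        nlinarith [sq_nonneg α, mul_nonneg hK0 (sq_nonneg α), hbase]
      · -- s = -α, so |v| ≥ α
        have hvα : α ≤ |v| := by
          rw [hv, hs]
          have : u + α ≤ |u + α| := le_abs_self _
          have hu0 := hu.1
          rw [show u - -α = u + α by ring]
          linarith
        have hsqrt : |v| ≤ Real.sqrt (p.2 ^ 2 + v ^ 2) := by
          rw [show |v| = Real.sqrt (v ^ 2) by rw [Real.sqrt_sq_eq_abs]]
          exact Real.sqrt_le_sqrt (by nlinarith [sq_nonneg p.2])
        have hmono : α - K * α ^ 2 ≤ |v| - K * v ^ 2 := by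
          have hfac : 0 ≤ (|v| - α) * (1 - K * (|v| + α)) := by
            apply mul_nonneg (by linarith)
            have : K * (|v| + α) ≤ K * (2 * δ) :=
              mul_le_mul_of_nonneg_left (by linarith) hK0
            nlinarith
          nlinarith [sq_abs v]
        nlinarith [sq_nonneg α, hbase, hsqrt, hmono, mul_nonneg hK0 (sq_nonneg α)]
      · -- s = L + α, so |v| ≥ α
        have hvα : α ≤ |v| := by
          rw [hv, hs]
          have : -(u - (L + α)) ≤ |u - (L + α)| := neg_le_abs _
          have hu1 := hu.2
          linarith
        have hsqrt : |v| ≤ Real.sqrt (p.2 ^ 2 + v ^ 2) := by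
          rw [show |v| = Real.sqrt (v ^ 2) by rw [Real.sqrt_sq_eq_abs]]
          exact Real.sqrt_le_sqrt (by nlinarith [sq_nonneg p.2])
        have hmono : α - K * α ^ 2 ≤ |v| - K * v ^ 2 := by
          have hfac : 0 ≤ (|v| - α) * (1 - K * (|v| + α)) := by
            apply mul_nonneg (by linarith)
            have : K * (|v| + α) ≤ K * (2 * δ) :=
              mul_le_mul_of_nonneg_left (by linarith) hK0
            nlinarith
          nlinarith [sq_abs v]
        nlinarith [sq_nonneg α, hbase, hsqrt, hmono, mul_nonneg hK0 (sq_nonneg α)]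
  linarith
end
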